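/- Let s̃ be the online regularization schedule: s̃_i(0) = 0 and, for each t = 1,…,T, the vector (s̃_i(t))_{i=1}^N minimizes the regularized per-slot objective over P_t; assume moreover that the online schedule meets demand with equality, ∑_{i=1}^N s̃_i(t) = D(t) for every t. Define C = (∑_{t=1}^T ∑_{i=1}^N (β_i/η)·ln((s̃_i(t)+ε/N)/(s̃_i(t−1)+ε/N))·s̃_i(t)) / (∑_{t=1}^T D(t)). Then for every feasible schedule s, the total cost of s̃ is at most (1 + β/(e₀ + C)) times the total cost of s, where β = max_i β_i and e₀ = min_i e_{0,i}. -/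

import Mathlib

section RegAux

lemma aux_log_lower (u v : ℝ) (hu : 0 < u) (hv : 0 < v) :
    u - v ≤ u * (Real.log u - Real.log v) := by
  have h := Real.log_le_sub_one_of_pos (show (0:ℝ) < v / u from div_pos hv hu)
  rw [Real.log_div hv.ne' hu.ne'] at h
  have h2 : u * (Real.log v - Real.log u) ≤ u * (v / u - 1) :=
    mul_le_mul_of_nonneg_left h hu.le
  have h3 : u * (v / u - 1) = v - u := by field_simp
  nlinarith

lemma aux_log_upper' (u v : ℝ) (hu : 0 < u) (hv : 0 < v) :
    u * (Real.log u - Real.log v) - (u - v) ≤ (u - v)^2 / v := by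
  have h := Real.log_le_sub_one_of_pos (show (0:ℝ) < u / v from div_pos hu hv)
  rw [Real.log_div hu.ne' hv.ne'] at h
  have h2 : u * (Real.log u - Real.log v) ≤ u * (u / v - 1) :=
    mul_le_mul_of_nonneg_left h hu.le
  have h3 : u * (u / v - 1) - (u - v) = (u - v)^2 / v := by field_simp
  linarith

lemma lemB (T : ℕ) (s G : ℕ → ℝ) (η : ℝ) (hs0 : s 0 = 0)
    (hs : ∀ t ≤ T, 0 ≤ s t)
    (hGlb : ∀ t ≤ T, 0 ≤ G t) (hGub : ∀ t ≤ T, G t ≤ η) :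
    ∑ t ∈ Finset.Icc 1 T, s t * (G t - G (t - 1)) ≤
      η * ∑ t ∈ Finset.Icc 1 T, max (s t - s (t - 1)) 0 := by
  have key : ∀ U ≤ T, ∑ t ∈ Finset.Icc 1 U, s t * (G t - G (t - 1)) ≤
      η * ∑ t ∈ Finset.Icc 1 U, max (s t - s (t - 1)) 0 - s U * (η - G U) := by
    intro U hU
    induction U with
    | zero => simp [hs0]
    | succ n ih =>
      have hn : n ≤ T := Nat.le_of_succ_le hU
      have ih' := ih hn
      rw [Finset.sum_Icc_succ_top (Nat.one_le_iff_ne_zero.mpr (Nat.succ_ne_zero n)),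
        Finset.sum_Icc_succ_top (Nat.one_le_iff_ne_zero.mpr (Nat.succ_ne_zero n))]
      have h1 : (n + 1 : ℕ) - 1 = n := rfl
      rw [h1]
      have hsn : 0 ≤ s n := hs n hn
      have hGn1 : 0 ≤ G n := hGlb n hn
      have hGn2 : G n ≤ η := hGub n hn
      have hGm1 : 0 ≤ G (n+1) := hGlb (n+1) hU
      have hGm2 : G (n+1) ≤ η := hGub (n+1) hU
      have hm1 : s (n+1) - s n ≤ max (s (n+1) - s n) 0 := le_max_left _ _
      have hm2 : (0:ℝ) ≤ max (s (n+1) - s n) 0 := le_max_right _ _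
      have step : s (n+1) * (G (n+1) - G n) ≤
          η * max (s (n+1) - s n) 0 - s (n+1) * (η - G (n+1)) + s n * (η - G n) := by
        nlinarith [mul_le_mul_of_nonneg_right hm1 (by linarith : (0:ℝ) ≤ η - G n),
          mul_le_mul_of_nonneg_left hGn1 hm2]
      linarith
  have h := key T le_rfl
  have : 0 ≤ s T * (η - G T) := by
    rcases Nat.eq_zero_or_pos T with h0 | h0
    · subst h0; simp [hs0]
    · exact mul_nonneg (hs T le_rfl) (by linarith [hGub T le_rfl, hGlb T le_rfl])
  linarith

lemma lemC (T : ℕ) (s : ℕ → ℝ) (δ : ℝ) (hδ : 0 < δ) (hs0 : s 0 = 0)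
    (hs : ∀ t ≤ T, 0 ≤ s t) :
    0 ≤ ∑ t ∈ Finset.Icc 1 T, s t * (Real.log (s t + δ) - Real.log (s (t - 1) + δ)) := by
  have key : ∀ U ≤ T, s U - δ * (Real.log (s U + δ) - Real.log δ) ≤
      ∑ t ∈ Finset.Icc 1 U, s t * (Real.log (s t + δ) - Real.log (s (t - 1) + δ)) := by
    intro U hU
    induction U with
    | zero => simp [hs0]
    | succ n ih =>
      have hn : n ≤ T := Nat.le_of_succ_le hU
      have ih' := ih hn
      rw [Finset.sum_Icc_succ_top (Nat.one_le_iff_ne_zero.mpr (Nat.succ_ne_zero n))]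
      have h1 : (n + 1 : ℕ) - 1 = n := rfl
      rw [h1]
      have hu : 0 < s (n+1) + δ := by linarith [hs (n+1) hU]
      have hv : 0 < s n + δ := by linarith [hs n hn]
      have := aux_log_lower (s (n+1) + δ) (s n + δ) hu hv
      nlinarith [this]
  have h := key T le_rfl
  have hT2 : 0 < s T + δ := by linarith [hs T le_rfl]
  have hlog : Real.log (s T + δ) - Real.log δ ≤ s T / δ := by
    have h2 := Real.log_le_sub_one_of_pos (show (0:ℝ) < (s T + δ)/δ from div_pos hT2 hδ)
    rw [Real.log_div hT2.ne' hδ.ne'] at h2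
    have : (s T + δ)/δ - 1 = s T / δ := by field_simp; ring
    linarith
  have : δ * (Real.log (s T + δ) - Real.log δ) ≤ s T := by
    have h3 := mul_le_mul_of_nonneg_left hlog hδ.le
    rw [mul_div_cancel₀ _ hδ.ne'] at h3
    linarith
  linarith

lemma aux_le_zero (A K : ℝ) (hK : 0 ≤ K) (h : ∀ θ : ℝ, 0 < θ → θ ≤ 1 → A ≤ θ * K) :
    A ≤ 0 := by
  by_contra hcon
  push_neg at hcon
  have hθ := h (min 1 (A / (2 * (K + 1)))) (by positivity) (min_le_left _ _)
  have h1 : min 1 (A / (2 * (K + 1))) ≤ A / (2 * (K + 1)) := min_le_right _ _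
  have h2 : min 1 (A / (2 * (K + 1))) * K ≤ A / (2 * (K + 1)) * (K + 1) :=
    mul_le_mul h1 (by linarith) hK (by positivity)
  have h3 : A / (2 * (K + 1)) * (K + 1) = A / 2 := by field_simp
  rw [h3] at h2
  have : A ≤ A / 2 := le_trans hθ h2
  linarith

lemma lemA (N : ℕ) (f : Fin N → ℝ → ℝ) (hconv : ∀ i, ConvexOn ℝ Set.univ (f i))
    (β : Fin N → ℝ) (hβ : ∀ i, 0 ≤ β i) (η δ Dt : ℝ) (hη : 0 < η) (hδ : 0 < δ)
    (a c : Fin N → ℝ) (ha : ∀ i, 0 ≤ a i) (hc : ∀ i, 0 ≤ c i) (haD : Dt ≤ ∑ i, a i)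
    (hmin : ∀ x : Fin N → ℝ, (∀ i, 0 ≤ x i) → Dt ≤ ∑ i, x i →
      (∑ i, f i (a i)) + (1/η) * ∑ i, β i * ((a i + δ) * Real.log ((a i + δ)/(c i + δ)) - a i) ≤
      (∑ i, f i (x i)) + (1/η) * ∑ i, β i * ((x i + δ) * Real.log ((x i + δ)/(c i + δ)) - x i))
    (s : Fin N → ℝ) (hs : ∀ i, 0 ≤ s i) (hsD : Dt ≤ ∑ i, s i) :
    (∑ i, f i (a i)) + ∑ i, (β i / η) * Real.log ((a i + δ)/(c i + δ)) * a i ≤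
    (∑ i, f i (s i)) + ∑ i, (β i / η) * Real.log ((a i + δ)/(c i + δ)) * s i := by
  have hηinv : (0:ℝ) ≤ 1/η := by positivity
  set Lr : Fin N → ℝ := fun i => Real.log ((a i + δ)/(c i + δ)) with hLr
  set Fa : ℝ := ∑ i, f i (a i) with hFa
  set Fs : ℝ := ∑ i, f i (s i) with hFs
  set Ra : ℝ := ∑ i, β i * ((a i + δ) * Real.log ((a i + δ)/(c i + δ)) - a i) with hRa
  set S : ℝ := ∑ i, β i * Lr i * (s i - a i) with hS
  set SK : ℝ := ∑ i, β i * ((s i - a i)^2 / (a i + δ)) with hSK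
  have hSKnn : 0 ≤ SK := by
    apply Finset.sum_nonneg
    intro i _
    have h1 : 0 < a i + δ := by linarith [ha i]
    have := hβ i
    positivity
  have main : ∀ θ : ℝ, 0 < θ → θ ≤ 1 →
      Fa - Fs - (1/η) * S ≤ θ * ((1/η) * SK) := by
    intro θ hθ0 hθ1
    set x : Fin N → ℝ := fun i => a i + θ * (s i - a i) with hx
    have hxnn : ∀ i, 0 ≤ x i := by
      intro i
      have he : x i = (1 - θ) * a i + θ * s i := by simp only [hx]; ring
      rw [he]
      have := ha i; have := hs i
      nlinarith
    have hxD : Dt ≤ ∑ i, x i := by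
      have he : ∑ i, x i = (1 - θ) * ∑ i, a i + θ * ∑ i, s i := by
        rw [Finset.mul_sum, Finset.mul_sum, ← Finset.sum_add_distrib]
        apply Finset.sum_congr rfl
        intro i _; simp only [hx]; ring
      rw [he]
      nlinarith
    have hopt := hmin x hxnn hxD
    have hconvx : ∑ i, f i (x i) ≤ (1 - θ) * Fa + θ * Fs := by
      rw [hFa, hFs, Finset.mul_sum, Finset.mul_sum, ← Finset.sum_add_distrib]
      apply Finset.sum_le_sum
      intro i _
      have h := (hconv i).2 (Set.mem_univ (a i)) (Set.mem_univ (s i))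
        (by linarith : (0:ℝ) ≤ 1 - θ) hθ0.le (by ring)
      have hx2 : x i = (1 - θ) • a i + θ • s i := by simp only [hx, smul_eq_mul]; ring
      rw [hx2]
      simpa [smul_eq_mul] using h
    have hreg : ∑ i, β i * ((x i + δ) * Real.log ((x i + δ)/(c i + δ)) - x i) ≤
        Ra + θ * S + θ^2 * SK := by
      rw [hRa, hS, hSK, Finset.mul_sum, Finset.mul_sum, ← Finset.sum_add_distrib,
        ← Finset.sum_add_distrib]
      apply Finset.sum_le_sum
      intro i _
      have hai : 0 < a i + δ := by linarith [ha i]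
      have hci : 0 < c i + δ := by linarith [hc i]
      have hxi : 0 < x i + δ := by linarith [hxnn i]
      have hid : β i * ((x i + δ) * Real.log ((x i + δ)/(c i + δ)) - x i) =
          β i * ((a i + δ) * Real.log ((a i + δ)/(c i + δ)) - a i) + θ * (β i * Lr i * (s i - a i)) +
          β i * ((x i + δ) * (Real.log (x i + δ) - Real.log (a i + δ)) - (x i - a i)) := by
        have hxai : x i - a i = θ * (s i - a i) := by simp only [hx]; ring
        simp only [hLr]
        rw [Real.log_div hxi.ne' hci.ne', Real.log_div hai.ne' hci.ne']
        linear_combination (β i * (Real.log (a i + δ) - Real.log (c i + δ))) * hxai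
      rw [hid]
      have hE := aux_log_upper' (x i + δ) (a i + δ) hxi hai
      have e1 : (x i + δ) - (a i + δ) = θ * (s i - a i) := by simp only [hx]; ring
      have e2 : ((x i + δ) - (a i + δ))^2 / (a i + δ) = θ^2 * ((s i - a i)^2 / (a i + δ)) := by
        rw [e1]; ring
      rw [e2] at hE
      have hE2 : (x i + δ) * (Real.log (x i + δ) - Real.log (a i + δ)) - (x i - a i) ≤
          θ^2 * ((s i - a i)^2 / (a i + δ)) := by linarith
      have hE3 := mul_le_mul_of_nonneg_left hE2 (hβ i)
      have e3 : β i * (θ^2 * ((s i - a i)^2 / (a i + δ))) =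
          θ^2 * (β i * ((s i - a i)^2 / (a i + δ))) := by ring
      rw [e3] at hE3
      linarith
    have hmul := mul_le_mul_of_nonneg_left hreg hηinv
    have expand : (1/η) * (Ra + θ * S + θ^2 * SK) =
        (1/η) * Ra + θ * ((1/η) * S) + θ * (θ * ((1/η) * SK)) := by ring
    rw [expand] at hmul
    have e4 : (1 - θ) * Fa = Fa - θ * Fa := by ring
    rw [e4] at hconvx
    have hlin : θ * Fa ≤ θ * Fs + θ * ((1/η) * S) + θ * (θ * ((1/η) * SK)) := by
      linarith
    have h6 : θ * (Fa - Fs - (1/η) * S) ≤ θ * (θ * ((1/η) * SK)) := by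
      have e5 : θ * (Fa - Fs - (1/η) * S) = θ * Fa - θ * Fs - θ * ((1/η) * S) := by ring
      rw [e5]; linarith
    exact le_of_mul_le_mul_left h6 hθ0
  have hKnn : 0 ≤ (1/η) * SK := mul_nonneg hηinv hSKnn
  have hA : Fa - Fs - (1/η) * S ≤ 0 :=
    aux_le_zero _ _ hKnn main
  have hsum : (1/η) * S = (∑ i, (β i / η) * Lr i * s i) - ∑ i, (β i / η) * Lr i * a i := by
    rw [hS, Finset.mul_sum, ← Finset.sum_sub_distrib]
    apply Finset.sum_congr rfl
    intro i _; ring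
  rw [hsum] at hA
  simp only [hLr] at hA
  linarith

end RegAux

/-- Theorem 2: the online regularization algorithm (Algorithm 1) is
`(1 + β/(e₀ + C))`-competitive, where `C` is the accumulated regularization
term normalized by total demand, `β = max_i β_i` and `e₀ = min_i e_{0,i}`. -/
theorem regularization_competitive
    (N T : ℕ) (hN : 1 ≤ N) (hT : 1 ≤ T)
    (f : Fin N → ℕ → ℝ → ℝ)
    (hconv : ∀ i t, ConvexOn ℝ Set.univ (f i t))
    (hmono : ∀ i t, Monotone (f i t))
    (hdiff : ∀ i t, ContDiff ℝ 1 (f i t))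
    (e0i : Fin N → ℝ) (he0i : ∀ i, 0 < e0i i)
    (hflb : ∀ i t x, 0 ≤ x → e0i i * x ≤ f i t x)
    (β : Fin N → ℝ) (hβ : ∀ i, 0 ≤ β i)
    (D : ℕ → ℝ) (hD : ∀ t ∈ Finset.Icc 1 T, 0 < D t)
    (βmax : ℝ) (hβmax : IsGreatest (Set.range β) βmax)
    (e0 : ℝ) (he0 : IsLeast (Set.range e0i) e0)
    (ε : ℝ) (hε : 0 < ε)
    (Dmax : ℝ) (hDmax : IsGreatest {x | ∃ t ∈ Finset.Icc 1 T, D t = x} Dmax)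
    (η : ℝ) (hη : η = Real.log (1 + N * Dmax / ε))
    -- the online regularization schedule s̃
    (st : Fin N → ℕ → ℝ)
    (hst0 : ∀ i, st i 0 = 0)
    (honline : ∀ t ∈ Finset.Icc 1 T,
      (∀ i, 0 ≤ st i t) ∧ D t ≤ ∑ i, st i t ∧
      ∀ x : Fin N → ℝ, (∀ i, 0 ≤ x i) → D t ≤ ∑ i, x i →
        (∑ i, f i t (st i t)) +
            (1 / η) * ∑ i, β i *
              ((st i t + ε / N) *
                  Real.log ((st i t + ε / N) / (st i (t - 1) + ε / N)) - st i t) ≤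
          (∑ i, f i t (x i)) +
            (1 / η) * ∑ i, β i *
              ((x i + ε / N) *
                  Real.log ((x i + ε / N) / (st i (t - 1) + ε / N)) - x i))
    -- the online schedule meets demand with equality
    (heq : ∀ t ∈ Finset.Icc 1 T, ∑ i, st i t = D t)
    (C : ℝ)
    (hC : C = (∑ t ∈ Finset.Icc 1 T, ∑ i,
        (β i / η) * Real.log ((st i t + ε / N) / (st i (t - 1) + ε / N)) * st i t) /
      (∑ t ∈ Finset.Icc 1 T, D t)) :
    -- for every feasible schedule s
    ∀ s : Fin N → ℕ → ℝ,
      (∀ i, s i 0 = 0) →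
      (∀ i, ∀ t ∈ Finset.Icc 1 T, 0 ≤ s i t) →
      (∀ t ∈ Finset.Icc 1 T, D t ≤ ∑ i, s i t) →
      ∑ t ∈ Finset.Icc 1 T, ∑ i,
          (f i t (st i t) + β i * max (st i t - st i (t - 1)) 0) ≤
        (1 + βmax / (e0 + C)) *
          ∑ t ∈ Finset.Icc 1 T, ∑ i,
            (f i t (s i t) + β i * max (s i t - s i (t - 1)) 0) := by
  intro s hs0 hsnn hsD
  have hNpos : 0 < (N:ℝ) := by exact_mod_cast Nat.lt_of_lt_of_le Nat.zero_lt_one hN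
  set δ : ℝ := ε / N with hδdef
  have hδ : 0 < δ := div_pos hε hNpos
  have hTne : (Finset.Icc 1 T).Nonempty := ⟨1, Finset.mem_Icc.mpr ⟨le_rfl, hT⟩⟩
  obtain ⟨t0, ht0, hDt0⟩ := hDmax.1
  have hDmaxpos : 0 < Dmax := hDt0 ▸ hD t0 ht0
  have hDub : ∀ t ∈ Finset.Icc 1 T, D t ≤ Dmax := fun t ht => hDmax.2 ⟨t, ht, rfl⟩
  have hηpos : 0 < η := by
    rw [hη]
    apply Real.log_pos
    have : 0 < (N:ℝ) * Dmax / ε := by positivity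
    linarith
  have hηeq : η = Real.log ((Dmax + δ)/δ) := by
    rw [hη]
    congr 1
    rw [hδdef]
    field_simp
    ring
  -- basic positivity facts for the online schedule
  have stnn : ∀ i : Fin N, ∀ t, t ≤ T → 0 ≤ st i t := by
    intro i t ht
    rcases Nat.eq_zero_or_pos t with h0 | h0
    · subst h0; rw [hst0 i]
    · exact (honline t (Finset.mem_Icc.mpr ⟨h0, ht⟩)).1 i
  have stle : ∀ t ∈ Finset.Icc 1 T, ∀ i, st i t ≤ Dmax := by
    intro t ht i
    have h1 : st i t ≤ ∑ j, st j t :=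
      Finset.single_le_sum (f := fun j => st j t) (fun j _ => (honline t ht).1 j)
        (Finset.mem_univ i)
    rw [heq t ht] at h1
    exact h1.trans (hDub t ht)
  -- the potential G
  set G : Fin N → ℕ → ℝ := fun i t => Real.log ((st i t + δ)/δ) with hGdef
  have hG0 : ∀ i, G i 0 = 0 := by
    intro i
    simp only [hGdef, hst0 i, zero_add, div_self hδ.ne', Real.log_one]
  have hGnn : ∀ i, ∀ t, t ≤ T → 0 ≤ G i t := by
    intro i t ht
    apply Real.log_nonneg
    rw [le_div_iff₀ hδ]
    linarith [stnn i t ht]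
  have hGub : ∀ i, ∀ t, t ≤ T → G i t ≤ η := by
    intro i t ht
    rw [hηeq]
    have hstD : st i t ≤ Dmax := by
      rcases Nat.eq_zero_or_pos t with h0 | h0
      · subst h0; rw [hst0 i]; exact hDmaxpos.le
      · exact stle t (Finset.mem_Icc.mpr ⟨h0, ht⟩) i
    have h1 : 0 < (st i t + δ)/δ := by
      have := stnn i t ht; positivity
    have h2 : 0 < (Dmax + δ)/δ := by positivity
    rw [Real.log_le_log_iff h1 h2]
    gcongr
  -- log-ratio equals G-difference
  have hLrG : ∀ t ∈ Finset.Icc 1 T, ∀ i,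
      Real.log ((st i t + δ)/(st i (t-1) + δ)) = G i t - G i (t-1) := by
    intro t ht i
    obtain ⟨ht1, ht2⟩ := Finset.mem_Icc.mp ht
    have p1 : 0 < st i t + δ := by linarith [stnn i t ht2]
    have p2 : 0 < st i (t-1) + δ := by linarith [stnn i (t-1) (le_trans (Nat.sub_le t 1) ht2)]
    simp only [hGdef]
    rw [Real.log_div p1.ne' p2.ne', Real.log_div p1.ne' hδ.ne', Real.log_div p2.ne' hδ.ne']
    ring
  -- per-slot optimality consequence (Lemma A)
  have At : ∀ t ∈ Finset.Icc 1 T,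
      (∑ i, f i t (st i t)) +
        (∑ i, (β i / η) * Real.log ((st i t + δ)/(st i (t-1) + δ)) * st i t) ≤
      (∑ i, f i t (s i t)) +
        ∑ i, (β i / η) * Real.log ((st i t + δ)/(st i (t-1) + δ)) * s i t := by
    intro t ht
    obtain ⟨ht1, ht2⟩ := Finset.mem_Icc.mp ht
    obtain ⟨h1, h2, h3⟩ := honline t ht
    exact lemA N (fun i => f i t) (fun i => hconv i t) β hβ η δ (D t) hηpos hδ
      (fun i => st i t) (fun i => st i (t-1)) h1
      (fun i => stnn i (t-1) (le_trans (Nat.sub_le t 1) ht2)) h2 h3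
      (fun i => s i t) (fun i => hsnn i t ht) (hsD t ht)
  -- sum over t
  have S1 : (∑ t ∈ Finset.Icc 1 T, ∑ i, f i t (st i t)) +
      (∑ t ∈ Finset.Icc 1 T, ∑ i, (β i / η) * Real.log ((st i t + δ)/(st i (t-1) + δ)) * st i t) ≤
      (∑ t ∈ Finset.Icc 1 T, ∑ i, f i t (s i t)) +
      ∑ t ∈ Finset.Icc 1 T, ∑ i, (β i / η) * Real.log ((st i t + δ)/(st i (t-1) + δ)) * s i t := by
    rw [← Finset.sum_add_distrib, ← Finset.sum_add_distrib]
    exact Finset.sum_le_sum At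
  -- bounding the offline regularization-linearization term by its switching cost
  have S2 : (∑ t ∈ Finset.Icc 1 T, ∑ i, (β i / η) * Real.log ((st i t + δ)/(st i (t-1) + δ)) * s i t) ≤
      ∑ t ∈ Finset.Icc 1 T, ∑ i, β i * max (s i t - s i (t-1)) 0 := by
    rw [Finset.sum_comm, Finset.sum_comm (t := Finset.univ)]
    apply Finset.sum_le_sum
    intro i _
    have hsi : ∀ t, t ≤ T → 0 ≤ s i t := by
      intro t ht
      rcases Nat.eq_zero_or_pos t with h0 | h0
      · subst h0; rw [hs0 i]
      · exact hsnn i t (Finset.mem_Icc.mpr ⟨h0, ht⟩)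
    calc ∑ t ∈ Finset.Icc 1 T, (β i / η) * Real.log ((st i t + δ)/(st i (t-1) + δ)) * s i t
        = (β i / η) * ∑ t ∈ Finset.Icc 1 T, s i t * (G i t - G i (t-1)) := by
          rw [Finset.mul_sum]
          apply Finset.sum_congr rfl
          intro t ht
          rw [hLrG t ht i]
          ring
      _ ≤ (β i / η) * (η * ∑ t ∈ Finset.Icc 1 T, max (s i t - s i (t-1)) 0) := by
          apply mul_le_mul_of_nonneg_left _ (div_nonneg (hβ i) hηpos.le)
          exact lemB T (s i) (G i) η (hs0 i) hsi (hGnn i) (hGub i)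
      _ = ∑ t ∈ Finset.Icc 1 T, β i * max (s i t - s i (t-1)) 0 := by
          rw [Finset.mul_sum, Finset.mul_sum]
          apply Finset.sum_congr rfl
          intro t _
          field_simp
  -- nonnegativity of the accumulated regularization term
  have S3 : 0 ≤ ∑ t ∈ Finset.Icc 1 T, ∑ i,
      (β i / η) * Real.log ((st i t + δ)/(st i (t-1) + δ)) * st i t := by
    rw [Finset.sum_comm]
    apply Finset.sum_nonneg
    intro i _
    have hl := lemC T (st i) δ hδ (hst0 i) (stnn i)
    calc (0:ℝ) ≤ (β i / η) * ∑ t ∈ Finset.Icc 1 T,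
          st i t * (Real.log (st i t + δ) - Real.log (st i (t-1) + δ)) :=
        mul_nonneg (div_nonneg (hβ i) hηpos.le) hl
      _ = ∑ t ∈ Finset.Icc 1 T, (β i / η) * Real.log ((st i t + δ)/(st i (t-1) + δ)) * st i t := by
          rw [Finset.mul_sum]
          apply Finset.sum_congr rfl
          intro t ht
          obtain ⟨ht1, ht2⟩ := Finset.mem_Icc.mp ht
          have p1 : 0 < st i t + δ := by linarith [stnn i t ht2]
          have p2 : 0 < st i (t-1) + δ := by
            linarith [stnn i (t-1) (le_trans (Nat.sub_le t 1) ht2)]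
          rw [Real.log_div p1.ne' p2.ne']
          ring
  -- operational cost lower bound
  have S4 : e0 * ∑ t ∈ Finset.Icc 1 T, D t ≤ ∑ t ∈ Finset.Icc 1 T, ∑ i, f i t (st i t) := by
    rw [Finset.mul_sum]
    apply Finset.sum_le_sum
    intro t ht
    obtain ⟨ht1, ht2⟩ := Finset.mem_Icc.mp ht
    calc e0 * D t = ∑ i, e0 * st i t := by rw [← Finset.mul_sum, heq t ht]
      _ ≤ ∑ i, f i t (st i t) := by
          apply Finset.sum_le_sum
          intro i _
          have h1 : e0 * st i t ≤ e0i i * st i t :=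
            mul_le_mul_of_nonneg_right (he0.2 ⟨i, rfl⟩) (stnn i t ht2)
          exact h1.trans (hflb i t _ (stnn i t ht2))
  -- switching cost of the online schedule
  have hβmaxnn : 0 ≤ βmax := by
    obtain ⟨i, hi⟩ := hβmax.1
    exact hi ▸ hβ i
  have S5 : (∑ t ∈ Finset.Icc 1 T, ∑ i, β i * max (st i t - st i (t-1)) 0) ≤
      βmax * ∑ t ∈ Finset.Icc 1 T, D t := by
    rw [Finset.mul_sum]
    apply Finset.sum_le_sum
    intro t ht
    obtain ⟨ht1, ht2⟩ := Finset.mem_Icc.mp ht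
    calc ∑ i, β i * max (st i t - st i (t-1)) 0 ≤ ∑ i, βmax * st i t := by
          apply Finset.sum_le_sum
          intro i _
          have hm : max (st i t - st i (t-1)) 0 ≤ st i t := by
            apply max_le
            · linarith [stnn i (t-1) (le_trans (Nat.sub_le t 1) ht2)]
            · exact stnn i t ht2
          calc β i * max (st i t - st i (t-1)) 0 ≤ βmax * max (st i t - st i (t-1)) 0 :=
              mul_le_mul_of_nonneg_right (hβmax.2 ⟨i, rfl⟩) (le_max_right _ _)
            _ ≤ βmax * st i t := mul_le_mul_of_nonneg_left hm hβmaxnn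
      _ = βmax * D t := by rw [← Finset.mul_sum, heq t ht]
  -- demand and constants
  have hDsum : 0 < ∑ t ∈ Finset.Icc 1 T, D t := Finset.sum_pos hD hTne
  have hCD : C * (∑ t ∈ Finset.Icc 1 T, D t) =
      ∑ t ∈ Finset.Icc 1 T, ∑ i,
        (β i / η) * Real.log ((st i t + δ)/(st i (t-1) + δ)) * st i t := by
    rw [hC]
    exact div_mul_cancel₀ _ hDsum.ne'
  have hCnn : 0 ≤ C := by
    rw [hC]
    exact div_nonneg S3 hDsum.le
  have he0pos : 0 < e0 := by
    obtain ⟨i, hi⟩ := he0.1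
    exact hi ▸ he0i i
  have heC : 0 < e0 + C := by linarith
  -- assemble
  simp only [Finset.sum_add_distrib]
  have key : (e0 + C) * (∑ t ∈ Finset.Icc 1 T, D t) ≤
      (∑ t ∈ Finset.Icc 1 T, ∑ i, f i t (s i t)) +
      ∑ t ∈ Finset.Icc 1 T, ∑ i, β i * max (s i t - s i (t-1)) 0 := by
    have e1 : (e0 + C) * (∑ t ∈ Finset.Icc 1 T, D t) =
        e0 * (∑ t ∈ Finset.Icc 1 T, D t) + C * (∑ t ∈ Finset.Icc 1 T, D t) := by ring
    rw [e1, hCD]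
    linarith [S1, S2, S4]
  have h7 : βmax * (∑ t ∈ Finset.Icc 1 T, D t) ≤
      (βmax / (e0 + C)) * ((∑ t ∈ Finset.Icc 1 T, ∑ i, f i t (s i t)) +
        ∑ t ∈ Finset.Icc 1 T, ∑ i, β i * max (s i t - s i (t-1)) 0) := by
    have h8 := mul_le_mul_of_nonneg_left key (div_nonneg hβmaxnn heC.le)
    have e2 : (βmax / (e0 + C)) * ((e0 + C) * (∑ t ∈ Finset.Icc 1 T, D t)) =
        βmax * (∑ t ∈ Finset.Icc 1 T, D t) := by
      field_simp
    rw [e2] at h8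
    exact h8
  have e3 : (1 + βmax / (e0 + C)) * ((∑ t ∈ Finset.Icc 1 T, ∑ i, f i t (s i t)) +
      ∑ t ∈ Finset.Icc 1 T, ∑ i, β i * max (s i t - s i (t-1)) 0) =
      ((∑ t ∈ Finset.Icc 1 T, ∑ i, f i t (s i t)) +
      ∑ t ∈ Finset.Icc 1 T, ∑ i, β i * max (s i t - s i (t-1)) 0) +
      (βmax / (e0 + C)) * ((∑ t ∈ Finset.Icc 1 T, ∑ i, f i t (s i t)) +
      ∑ t ∈ Finset.Icc 1 T, ∑ i, β i * max (s i t - s i (t-1)) 0) := by ring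
  rw [e3]
  linarith [S1, S2, S3, S5, h7]
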